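/- With the same setup, the numerator of sectional curvature for X, Y ∈ 𝔤 satisfies γ(ℛ(X,Y)X, Y) = γ(ρ_X X, ρ_Y Y) - ‖ρ_X Y‖²_γ + (3/4)‖[X,Y]‖²_γ - γ(ρ_X Y, [X,Y]) + γ(Y, [X,[X,Y]]). -/
import Mathlib


/- STATEMENT 8: numerator of sectional curvature for the right-invariant
metric on a finite-dimensional Lie group, in right trivialization:
γ(ℛ(X,Y)X,Y) = γ(ρ_X X, ρ_Y Y) - ‖ρ_X Y‖²_γ + (3/4)‖[X,Y]‖²_γ
               - γ(ρ_X Y, [X,Y]) + γ(Y, [X,[X,Y]]),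
where ℛ(X,Y) = [ρ_X,ρ_Y] + ρ_{[X,Y]} - (1/2)[ρ_X,ad_Y] + (1/2)[ρ_Y,ad_X]
- (1/4)ad_{[X,Y]} and ρ is the symmetrized operator of the metric. -/
theorem sectional_curvature_numerator_formula
    {L : Type*} [LieRing L] [LieAlgebra ℝ L] [Module.Finite ℝ L]
    (γ : L →ₗ[ℝ] L →ₗ[ℝ] ℝ)
    (hsymm : ∀ x y : L, γ x y = γ y x)
    (hpos : ∀ x : L, x ≠ 0 → 0 < γ x x)
    (ρ : L → Module.End ℝ L)
    (hρ : ∀ ξ η ζ : L,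
      γ (ρ ξ η) ζ = (1 / 2) * γ η ⁅ξ, ζ⁆ + (1 / 2) * γ ξ ⁅η, ζ⁆)
    (X Y : L) :
    γ ((⁅ρ X, ρ Y⁆ + ρ ⁅X, Y⁆
        - (1 / 2 : ℝ) • ⁅ρ X, LieAlgebra.ad ℝ L Y⁆
        + (1 / 2 : ℝ) • ⁅ρ Y, LieAlgebra.ad ℝ L X⁆
        - (1 / 4 : ℝ) • LieAlgebra.ad ℝ L ⁅X, Y⁆) X) Y
    =
    γ (ρ X X) (ρ Y Y) - γ (ρ X Y) (ρ X Y)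
      + (3 / 4) * γ ⁅X, Y⁆ ⁅X, Y⁆
      - γ (ρ X Y) ⁅X, Y⁆
      + γ Y ⁅X, ⁅X, Y⁆⁆ := by
  -- ρ is symmetric in its two arguments (needs nondegeneracy from hpos)
  have hρ' : ∀ ζ : L, γ (ρ X Y) ζ = γ (ρ Y X) ζ := by
    intro ζ; rw [hρ, hρ]; ring
  have hzero : ∀ v : L, (∀ ζ, γ v ζ = 0) → v = 0 := by
    intro v hv
    by_contra h
    exact (hpos v h).ne' (hv v)
  have hρsym : ρ Y X = ρ X Y := by
    have := hzero (ρ X Y - ρ Y X) (fun ζ => by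
      rw [map_sub, LinearMap.sub_apply, hρ' ζ, sub_self])
    have h2 := sub_eq_zero.mp this
    exact h2.symm
  -- expand the operator application
  simp only [LinearMap.sub_apply, LinearMap.add_apply, LinearMap.smul_apply,
    Ring.lie_def, Module.End.mul_apply, LieAlgebra.ad_apply, lie_self,
    map_zero, LinearMap.zero_apply, map_sub, map_add, map_smul,
    LinearMap.map_sub, LinearMap.map_add, smul_eq_mul, hρsym,
    zero_sub, map_neg, LinearMap.neg_apply]
  -- instances of the defining property of ρ
  have h1 := hρ X (ρ X Y) Y
  have h2 := hρ Y (ρ X X) Y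
  have h3 := hρ ⁅X, Y⁆ X Y
  have h4 := hρ X ⁅Y, X⁆ Y
  have h5 := hρ X Y (ρ X Y)
  have h6 := hρ Y Y (ρ X X)
  have h7 := hρ X Y ⁅X, Y⁆
  -- bracket-flip and symmetry facts
  have g1 : γ X ⁅ρ X Y, Y⁆ = - γ X ⁅Y, ρ X Y⁆ := by
    rw [show ⁅ρ X Y, Y⁆ = -⁅Y, ρ X Y⁆ from (lie_skew (ρ X Y) Y).symm, map_neg]
  have g2 : γ (ρ X X) ⁅Y, Y⁆ = 0 := by simp
  have g3 : γ Y ⁅ρ X X, Y⁆ = - γ Y ⁅Y, ρ X X⁆ := by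
    rw [show ⁅ρ X X, Y⁆ = -⁅Y, ρ X X⁆ from (lie_skew (ρ X X) Y).symm, map_neg]
  have g4 : γ X ⁅⁅X, Y⁆, Y⁆ = - γ X ⁅Y, ⁅X, Y⁆⁆ := by
    rw [show ⁅⁅X, Y⁆, Y⁆ = -⁅Y, ⁅X, Y⁆⁆ from (lie_skew ⁅X, Y⁆ Y).symm, map_neg]
  have g5 : γ ⁅Y, X⁆ ⁅X, Y⁆ = - γ ⁅X, Y⁆ ⁅X, Y⁆ := by
    rw [show ⁅Y, X⁆ = -⁅X, Y⁆ from (lie_skew Y X).symm, map_neg,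
      LinearMap.neg_apply]
  have g6 : γ X ⁅⁅Y, X⁆, Y⁆ = γ X ⁅Y, ⁅X, Y⁆⁆ := by
    rw [show ⁅Y, X⁆ = -⁅X, Y⁆ from (lie_skew Y X).symm]
    rw [neg_lie, show ⁅⁅X, Y⁆, Y⁆ = -⁅Y, ⁅X, Y⁆⁆ from (lie_skew ⁅X, Y⁆ Y).symm]
    rw [neg_neg]
  have g7 : γ ⁅Y, ρ X X⁆ Y = γ Y ⁅Y, ρ X X⁆ := hsymm _ _
  have g8 : γ ⁅X, ρ X Y⁆ Y = γ Y ⁅X, ρ X Y⁆ := hsymm _ _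
  have g9 : γ ⁅⁅X, Y⁆, X⁆ Y = - γ Y ⁅X, ⁅X, Y⁆⁆ := by
    rw [hsymm, show ⁅⁅X, Y⁆, X⁆ = -⁅X, ⁅X, Y⁆⁆ from (lie_skew ⁅X, Y⁆ X).symm,
      map_neg]
  have g10 : γ (ρ X X) (ρ Y Y) = γ (ρ Y Y) (ρ X X) := hsymm _ _
  linear_combination h1 - h2 + h3 - (1/2) * h4 + (1/2) * g1 - (1/2) * g2
    - (1/2) * g3 + (1/2) * g4 - (1/4) * g5 - (1/4) * g6 + (1/2) * g7
    - (1/2) * g8 - (1/4) * g9 - g10 + h5 - h6 + (3/2) * h7
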